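/- arXiv:1704.05199 — 3 statements merged into one kernel-verified Lean document; each statement's English description precedes it below -/
import Mathlib

section
/- Let X be an integrable random variable and f : ℝ → ℝ a convex differentiable function with f(X) integrable. Then E[X] minimizes u ↦ E[d_f(X,u)] over ℝ, where d_f is the Bregman divergence of f; that is, for all u, E[d_f(X, E[X])] ≤ E[d_f(X, u)]. -/
open MeasureTheory

lemma tangent_le {f : ℝ → ℝ} (hconv : ConvexOn ℝ Set.univ f)
    (hdiff : Differentiable ℝ f) (u m : ℝ) :
    f u + deriv f u * (m - u) ≤ f m := by
  rcases lt_trichotomy u m with h | h | h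
  · have h2 : deriv f u * (m - u) ≤ f m - f u := by
      have := hconv.deriv_le_slope (Set.mem_univ u) (Set.mem_univ m) h (hdiff u)
      rw [slope_def_field] at this
      calc deriv f u * (m - u) ≤ (f m - f u) / (m - u) * (m - u) := by
            apply mul_le_mul_of_nonneg_right this (by linarith)
        _ = f m - f u := by rw [div_mul_cancel₀]; exact sub_ne_zero.mpr (by linarith)
    linarith
  · simp [h]
  · have := hconv.slope_le_deriv (Set.mem_univ m) (Set.mem_univ u) h (hdiff u)
    rw [slope_def_field] at this
    have h2 : f u - f m ≤ deriv f u * (u - m) := by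
      calc f u - f m = (f u - f m) / (u - m) * (u - m) := by
            rw [div_mul_cancel₀]; exact sub_ne_zero.mpr (by linarith)
        _ ≤ deriv f u * (u - m) := mul_le_mul_of_nonneg_right this (by linarith)
    linarith

/-- `E[X]` minimizes `u ↦ E[d_f(X,u)]` for the Bregman divergence of a convex
differentiable `f`. -/
theorem stmt_3 {Ω : Type*} [MeasurableSpace Ω] (μ : Measure Ω) [IsProbabilityMeasure μ]
    (X : Ω → ℝ) (hX : Integrable X μ)
    (f : ℝ → ℝ) (hconv : ConvexOn ℝ Set.univ f) (hdiff : Differentiable ℝ f)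
    (hfX : Integrable (fun ω => f (X ω)) μ) :
    ∀ u : ℝ,
      ∫ ω, (f (X ω) - f (∫ ω', X ω' ∂μ)
          - deriv f (∫ ω', X ω' ∂μ) * (X ω - ∫ ω', X ω' ∂μ)) ∂μ
        ≤ ∫ ω, (f (X ω) - f u - deriv f u * (X ω - u)) ∂μ := by
  intro u
  set m := ∫ ω', X ω' ∂μ with hm
  have key : ∀ c : ℝ, ∫ ω, (f (X ω) - f c - deriv f c * (X ω - c)) ∂μ
      = (∫ ω, f (X ω) ∂μ) - f c - deriv f c * (m - c) := by
    intro c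
    have h1 : Integrable (fun ω => f (X ω) - f c) μ :=
      hfX.sub (integrable_const _)
    have h2 : Integrable (fun ω => deriv f c * (X ω - c)) μ :=
      ((hX.sub (integrable_const _)).const_mul _)
    rw [integral_sub h1 h2, integral_sub hfX (integrable_const _),
      integral_const_mul, integral_sub hX (integrable_const _),
      integral_const, integral_const]
    simp [hm]
  rw [key, key]
  have h1 := tangent_le hconv hdiff u m
  have h2 : f m + deriv f m * (m - m) = f m := by ring_nf
  linarith
end

section
/- If f : ℝ → ℝ is strictly convex and differentiable, X is an integrable random variable with f(X) integrable, and u* minimizes u ↦ E[d_f(X,u)], then u* = E[X]. -/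
open MeasureTheory

/-- Tangent line at `b` lies strictly below a strictly convex function at `a ≠ b`. -/
lemma tangent_lt {f : ℝ → ℝ} (hconv : StrictConvexOn ℝ Set.univ f)
    (hdiff : Differentiable ℝ f) {a b : ℝ} (hab : a ≠ b) :
    f b + deriv f b * (a - b) < f a := by
  rcases lt_or_gt_of_ne hab with h | h
  · have := hconv.slope_lt_deriv (Set.mem_univ a) (Set.mem_univ b) h (hdiff b)
    rw [slope_def_field] at this
    have hba : (0:ℝ) < b - a := by linarith
    rw [div_lt_iff₀ hba] at this
    nlinarith
  · have := hconv.deriv_lt_slope (Set.mem_univ b) (Set.mem_univ a) h (hdiff b)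
    rw [slope_def_field] at this
    have hab' : (0:ℝ) < a - b := by linarith
    rw [lt_div_iff₀ hab'] at this
    nlinarith

/-- For strictly convex differentiable `f`, any minimizer of `u ↦ E[d_f(X,u)]`
equals `E[X]`. -/
theorem stmt_4 {Ω : Type*} [MeasurableSpace Ω] (μ : Measure Ω) [IsProbabilityMeasure μ]
    (X : Ω → ℝ) (hX : Integrable X μ)
    (f : ℝ → ℝ) (hconv : StrictConvexOn ℝ Set.univ f) (hdiff : Differentiable ℝ f)
    (hfX : Integrable (fun ω => f (X ω)) μ) (ustar : ℝ)
    (hmin : ∀ u : ℝ,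
      ∫ ω, (f (X ω) - f ustar - deriv f ustar * (X ω - ustar)) ∂μ
        ≤ ∫ ω, (f (X ω) - f u - deriv f u * (X ω - u)) ∂μ) :
    ustar = ∫ ω, X ω ∂μ := by
  set m := ∫ ω, X ω ∂μ with hm
  have hval : ∀ u : ℝ, ∫ ω, (f (X ω) - f u - deriv f u * (X ω - u)) ∂μ
      = (∫ ω, f (X ω) ∂μ) - f u - deriv f u * (m - u) := by
    intro u
    have h1 : Integrable (fun ω => f (X ω) - f u) μ := hfX.sub (integrable_const _)
    have h2 : Integrable (fun ω => deriv f u * (X ω - u)) μ :=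
      ((hX.sub (integrable_const _)).const_mul _)
    rw [integral_sub h1 h2, integral_sub hfX (integrable_const _),
      integral_const_mul, integral_sub hX (integrable_const _), integral_const]
    simp [hm]
  have key := hmin m
  rw [hval m, hval ustar] at key
  simp only [sub_self, mul_zero, sub_zero] at key
  -- key : ∫ f X - f ustar - deriv f ustar * (m - ustar) ≤ ∫ f X - f m
  by_contra hne
  have := tangent_lt hconv hdiff (a := m) (b := ustar) (fun h => hne h.symm)
  linarith
end

section
/- Let X be a positive integrable random variable with X·log X integrable, G a sub-σ-algebra, and X̂ = E[X|G]. Then for any positive G-measurable integrable Z with E[X·|log Z|] < ∞, E[ℓ_P(X, Z)] = E[ℓ_P(X, X̂)] + E[ℓ_P(X̂, Z)], where ℓ_P(x,y) = x·log(x/y) - x + y. In particular E[ℓ_P(X, X̂)] ≤ E[ℓ_P(X, Z)]. -/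
open MeasureTheory
open scoped ENNReal

private lemma aux_mul_log_le {x y : ℝ} (hx : 0 < x) (hy : 0 < y) :
    x * Real.log y ≤ x * Real.log x + y - x := by
  have h := Real.log_le_sub_one_of_pos (div_pos hy hx)
  rw [Real.log_div hy.ne' hx.ne'] at h
  have h2 : x * (Real.log y - Real.log x) ≤ x * (y / x - 1) :=
    mul_le_mul_of_nonneg_left h hx.le
  have h3 : x * (y / x) = y := by field_simp
  nlinarith [h2, h3]

private lemma aux_loss_nonneg {x y : ℝ} (hx : 0 < x) (hy : 0 < y) :
    0 ≤ x * Real.log (x / y) - x + y := by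
  have h := aux_mul_log_le hx hy
  rw [Real.log_div hx.ne' hy.ne', mul_sub]
  linarith

private lemma aux_pospart {x y : ℝ} (hx : 0 < x) (hy : 0 < y) :
    x * max (Real.log y) 0 ≤ max (x * Real.log x) 0 + y := by
  rcases le_total (Real.log y) 0 with h | h
  · rw [max_eq_right h, mul_zero]
    positivity
  · rw [max_eq_left h]
    have := aux_mul_log_le hx hy
    have h2 : x * Real.log x ≤ max (x * Real.log x) 0 := le_max_left _ _
    linarith

private lemma aux_negpart {y : ℝ} (hy : 0 < y) :
    y * max (-Real.log y) 0 ≤ 1 := by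
  rcases le_total (Real.log y) 0 with h | h
  · rw [max_eq_left (by linarith)]
    have h2 : 1 - y⁻¹ ≤ Real.log y := Real.one_sub_inv_le_log_of_pos hy
    have h3 : y * (-Real.log y) ≤ y * (y⁻¹ - 1) := by
      apply mul_le_mul_of_nonneg_left _ hy.le
      linarith
    have h4 : y * (y⁻¹ - 1) = 1 - y := by field_simp
    nlinarith
  · rw [max_eq_right (by linarith), mul_zero]
    norm_num

/-- Orthogonality principle for conditional expectation under the Poisson loss
`ℓ_P(x,y) = x log(x/y) - x + y`. -/
theorem stmt_13 {Ω : Type*} {m0 : MeasurableSpace Ω} (μ : Measure Ω)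
    [IsProbabilityMeasure μ] (G : MeasurableSpace Ω) (hG : G ≤ m0)
    (X : Ω → ℝ) (hXpos : ∀ᵐ ω ∂μ, 0 < X ω) (hX : Integrable X μ)
    (hXlogX : Integrable (fun ω => X ω * Real.log (X ω)) μ)
    (Z : Ω → ℝ) (hZpos : ∀ᵐ ω ∂μ, 0 < Z ω) (hZmeas : StronglyMeasurable[G] Z)
    (hZ : Integrable Z μ)
    (hXlogZ : Integrable (fun ω => X ω * |Real.log (Z ω)|) μ) :
    (∫ ω, (X ω * Real.log (X ω / Z ω) - X ω + Z ω) ∂μ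
        = (∫ ω, (X ω * Real.log (X ω / (μ[X|G]) ω) - X ω + (μ[X|G]) ω) ∂μ)
          + ∫ ω, ((μ[X|G]) ω * Real.log ((μ[X|G]) ω / Z ω) - (μ[X|G]) ω + Z ω) ∂μ)
      ∧ ∫ ω, (X ω * Real.log (X ω / (μ[X|G]) ω) - X ω + (μ[X|G]) ω) ∂μ
          ≤ ∫ ω, (X ω * Real.log (X ω / Z ω) - X ω + Z ω) ∂μ := by
  set Y := μ[X|G] with hYdef
  have hYmG : StronglyMeasurable[G] Y := stronglyMeasurable_condExp
  have hYm : Measurable[m0] Y := (hYmG.mono hG).measurable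
  have hYint : Integrable Y μ := integrable_condExp
  have hZm : Measurable[m0] Z := (hZmeas.mono hG).measurable
  have hXm : AEMeasurable X μ := hX.aemeasurable
  -- positivity of Y
  have hYpos : ∀ᵐ ω ∂μ, 0 < Y ω := by
    set t : Set Ω := Y ⁻¹' Set.Iic 0 with ht_def
    have ht : MeasurableSet[G] t := hYmG.measurable measurableSet_Iic
    have h1 : ∫ ω in t, Y ω ∂μ = ∫ ω in t, X ω ∂μ := setIntegral_condExp hG hX ht
    have h2 : ∫ ω in t, Y ω ∂μ ≤ 0 :=
      integral_nonpos_of_ae ((ae_restrict_mem (hG t ht)).mono fun ω h => h)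
    have hnn : 0 ≤ᵐ[μ.restrict t] X :=
      ae_restrict_of_ae (hXpos.mono fun ω h => h.le)
    have h0 : ∫ ω in t, X ω ∂μ = 0 :=
      le_antisymm (h1 ▸ h2) (integral_nonneg_of_ae hnn)
    have hXz : X =ᵐ[μ.restrict t] 0 :=
      (integral_eq_zero_iff_of_nonneg_ae hnn hX.restrict).mp h0
    have hfalse : ∀ᵐ ω ∂μ.restrict t, False := by
      filter_upwards [hXz, ae_restrict_of_ae hXpos] with ω h1' h2'
      exact absurd h1' h2'.ne'
    have htz : μ t = 0 := by
      have := ae_iff.mp hfalse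
      simpa using this
    rw [ae_iff]
    convert htz using 2
    ext ω
    simp [ht_def, not_lt]
  -- the density-swap lemma
  have hswap : ∀ g : Ω → ℝ≥0∞, Measurable[G] g →
      ∫⁻ ω, g ω * ENNReal.ofReal (X ω) ∂μ = ∫⁻ ω, g ω * ENNReal.ofReal (Y ω) ∂μ := by
    intro g hg
    have hgm : Measurable[m0] g := hg.mono hG le_rfl
    have hXD : AEMeasurable (fun ω => ENNReal.ofReal (X ω)) μ :=
      ENNReal.measurable_ofReal.comp_aemeasurable hXm
    have hYD : Measurable[m0] fun ω => ENNReal.ofReal (Y ω) :=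
      ENNReal.measurable_ofReal.comp hYm
    have htrim : (μ.withDensity fun ω => ENNReal.ofReal (X ω)).trim hG
        = (μ.withDensity fun ω => ENNReal.ofReal (Y ω)).trim hG := by
      refine Measure.ext fun s hs => ?_
      rw [trim_measurableSet_eq hG hs, trim_measurableSet_eq hG hs,
        withDensity_apply _ (hG s hs), withDensity_apply _ (hG s hs),
        ← ofReal_integral_eq_lintegral_ofReal hX.restrict
          (ae_restrict_of_ae (hXpos.mono fun ω h => h.le)),
        ← ofReal_integral_eq_lintegral_ofReal hYint.restrict
          (ae_restrict_of_ae (hYpos.mono fun ω h => h.le)),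
        setIntegral_condExp hG hX hs]
    calc ∫⁻ ω, g ω * ENNReal.ofReal (X ω) ∂μ
        = ∫⁻ ω, g ω ∂(μ.withDensity fun ω => ENNReal.ofReal (X ω)) := by
          rw [lintegral_withDensity_eq_lintegral_mul₀ hXD hgm.aemeasurable]
          simp [mul_comm]
      _ = ∫⁻ ω, g ω ∂((μ.withDensity fun ω => ENNReal.ofReal (X ω)).trim hG) :=
          (lintegral_trim hG hg).symm
      _ = ∫⁻ ω, g ω ∂((μ.withDensity fun ω => ENNReal.ofReal (Y ω)).trim hG) := by
          rw [htrim]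
      _ = ∫⁻ ω, g ω ∂(μ.withDensity fun ω => ENNReal.ofReal (Y ω)) :=
          lintegral_trim hG hg
      _ = ∫⁻ ω, g ω * ENNReal.ofReal (Y ω) ∂μ := by
          rw [lintegral_withDensity_eq_lintegral_mul₀ hYD.aemeasurable hgm.aemeasurable]
          simp [mul_comm]
  -- positive and negative parts of log Y
  set P : Ω → ℝ := fun ω => max (Real.log (Y ω)) 0 with hPdef
  set N : Ω → ℝ := fun ω => max (-Real.log (Y ω)) 0 with hNdef
  have hPmG : Measurable[G] P :=
    (Real.measurable_log.comp hYmG.measurable).max measurable_const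
  have hNmG : Measurable[G] N :=
    ((Real.measurable_log.comp hYmG.measurable).neg).max measurable_const
  have hPm : Measurable[m0] P := (Real.measurable_log.comp hYm).max measurable_const
  have hNm : Measurable[m0] N := ((Real.measurable_log.comp hYm).neg).max measurable_const
  -- X * P integrable
  have hXP : Integrable (fun ω => X ω * P ω) μ := by
    refine Integrable.mono' ((hXlogX.pos_part).add hYint)
      ((hXm.mul hPm.aemeasurable).aestronglyMeasurable) ?_
    filter_upwards [hXpos, hYpos] with ω h1 h2
    have hb := aux_pospart h1 h2
    have hnn : 0 ≤ X ω * P ω := mul_nonneg h1.le (le_max_right _ _)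
    rw [Real.norm_eq_abs, abs_of_nonneg hnn]
    exact hb
  -- Y * P integrable
  have hYP : Integrable (fun ω => Y ω * P ω) μ := by
    have h1 : Integrable (P * X) μ := by
      have : (P * X) = fun ω => X ω * P ω := by ext ω; exact mul_comm _ _
      rw [this]; exact hXP
    have h2 := condExp_mul_of_stronglyMeasurable_left hPmG.stronglyMeasurable h1 hX
    have h3 : Integrable (P * Y) μ := (integrable_condExp.congr h2)
    have : (fun ω => Y ω * P ω) = P * Y := by ext ω; exact mul_comm _ _
    rw [this]; exact h3
  -- Y * N integrable
  have hYN : Integrable (fun ω => Y ω * N ω) μ := by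
    refine Integrable.mono' (integrable_const 1)
      ((hYm.mul hNm).aemeasurable.aestronglyMeasurable) ?_
    filter_upwards [hYpos] with ω h1
    have hb := aux_negpart h1
    have hnn : 0 ≤ Y ω * N ω := mul_nonneg h1.le (le_max_right _ _)
    rw [Real.norm_eq_abs, abs_of_nonneg hnn]
    exact hb
  -- X * N integrable via swap
  have hXN : Integrable (fun ω => X ω * N ω) μ := by
    have hkey : ∫⁻ ω, ENNReal.ofReal (X ω * N ω) ∂μ < ⊤ := by
      have e1 : ∀ ω, ENNReal.ofReal (X ω * N ω)
          = ENNReal.ofReal (N ω) * ENNReal.ofReal (X ω) := by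
        intro ω
        rw [mul_comm (X ω), ENNReal.ofReal_mul (le_max_right _ _)]
      have e2 : ∀ ω, ENNReal.ofReal (Y ω * N ω)
          = ENNReal.ofReal (N ω) * ENNReal.ofReal (Y ω) := by
        intro ω
        rw [mul_comm (Y ω), ENNReal.ofReal_mul (le_max_right _ _)]
      calc ∫⁻ ω, ENNReal.ofReal (X ω * N ω) ∂μ
          = ∫⁻ ω, ENNReal.ofReal (N ω) * ENNReal.ofReal (X ω) ∂μ := by
            simp_rw [e1]
        _ = ∫⁻ ω, ENNReal.ofReal (N ω) * ENNReal.ofReal (Y ω) ∂μ :=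
            hswap _ (ENNReal.measurable_ofReal.comp hNmG)
        _ = ∫⁻ ω, ENNReal.ofReal (Y ω * N ω) ∂μ := by simp_rw [e2]
        _ < ⊤ := @Integrable.lintegral_lt_top Ω m0 μ _ hYN
    have hnn2 : 0 ≤ᵐ[μ] fun ω => X ω * N ω := by
      filter_upwards [hXpos] with ω h1
      exact mul_nonneg h1.le (le_max_right _ _)
    exact ⟨(hXm.mul hNm.aemeasurable).aestronglyMeasurable,
      (hasFiniteIntegral_iff_ofReal hnn2).mpr hkey⟩
  -- X log Y and Y log Y integrable
  have hid : ∀ a : ℝ, max a 0 - max (-a) 0 = a := fun a => max_zero_sub_eq_self a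
  have hXlogY : Integrable (fun ω => X ω * Real.log (Y ω)) μ := by
    refine (hXP.sub hXN).congr (Filter.Eventually.of_forall fun ω => ?_)
    simp only [Pi.sub_apply, hPdef, hNdef]
    linear_combination X ω * hid (Real.log (Y ω))
  have hYlogY : Integrable (fun ω => Y ω * Real.log (Y ω)) μ := by
    refine (hYP.sub hYN).congr (Filter.Eventually.of_forall fun ω => ?_)
    simp only [Pi.sub_apply, hPdef, hNdef]
    linear_combination Y ω * hid (Real.log (Y ω))
  -- X log Z integrable
  have hXlogZ' : Integrable (fun ω => X ω * Real.log (Z ω)) μ := by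
    refine hXlogZ.mono' ((hXm.mul (Real.measurable_log.comp hZm).aemeasurable).aestronglyMeasurable) ?_
    filter_upwards [hXpos] with ω h1
    rw [Real.norm_eq_abs, abs_mul, abs_of_pos h1]
  -- Y |log Z| integrable, hence Y log Z integrable
  have hYlogZabs : Integrable (fun ω => Y ω * |Real.log (Z ω)|) μ := by
    have hAmG : StronglyMeasurable[G] fun ω => |Real.log (Z ω)| :=
      ((Real.measurable_log.comp hZmeas.measurable).abs).stronglyMeasurable
    have h1 : Integrable ((fun ω => |Real.log (Z ω)|) * X) μ := by
      have : ((fun ω => |Real.log (Z ω)|) * X) = fun ω => X ω * |Real.log (Z ω)| := by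
        ext ω; exact mul_comm _ _
      rw [this]; exact hXlogZ
    have h2 := condExp_mul_of_stronglyMeasurable_left hAmG h1 hX
    have h3 : Integrable ((fun ω => |Real.log (Z ω)|) * Y) μ := integrable_condExp.congr h2
    have : (fun ω => Y ω * |Real.log (Z ω)|) = (fun ω => |Real.log (Z ω)|) * Y := by
      ext ω; exact mul_comm _ _
    rw [this]; exact h3
  have hYlogZ : Integrable (fun ω => Y ω * Real.log (Z ω)) μ := by
    refine hYlogZabs.mono' ((hYm.mul (Real.measurable_log.comp hZm)).aemeasurable.aestronglyMeasurable) ?_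
    filter_upwards [hYpos] with ω h1
    rw [Real.norm_eq_abs, abs_mul, abs_of_pos h1]
  -- cross term
  have hcross : ∫ ω, X ω * Real.log (Y ω) ∂μ - ∫ ω, X ω * Real.log (Z ω) ∂μ
      = ∫ ω, Y ω * Real.log (Y ω) ∂μ - ∫ ω, Y ω * Real.log (Z ω) ∂μ := by
    set g : Ω → ℝ := fun ω => Real.log (Y ω) - Real.log (Z ω) with hgdef
    have hgG : StronglyMeasurable[G] g :=
      ((Real.measurable_log.comp hYmG.measurable).sub
        (Real.measurable_log.comp hZmeas.measurable)).stronglyMeasurable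
    have hgX : Integrable (g * X) μ := by
      refine (hXlogY.sub hXlogZ').congr (Filter.Eventually.of_forall fun ω => ?_)
      simp only [hgdef, Pi.mul_apply, Pi.sub_apply]
      ring
    have h1 := condExp_mul_of_stronglyMeasurable_left hgG hgX hX
    have h2 : ∫ ω, (g * X) ω ∂μ = ∫ ω, (g * Y) ω ∂μ := by
      rw [← integral_condExp hG (f := g * X)]
      exact integral_congr_ae h1
    have e1 : ∫ ω, (g * X) ω ∂μ
        = ∫ ω, X ω * Real.log (Y ω) ∂μ - ∫ ω, X ω * Real.log (Z ω) ∂μ := by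
      rw [← integral_sub hXlogY hXlogZ']
      refine integral_congr_ae (Filter.Eventually.of_forall fun ω => ?_)
      simp only [hgdef, Pi.mul_apply, Pi.sub_apply]
      ring
    have e2 : ∫ ω, (g * Y) ω ∂μ
        = ∫ ω, Y ω * Real.log (Y ω) ∂μ - ∫ ω, Y ω * Real.log (Z ω) ∂μ := by
      rw [← integral_sub hYlogY hYlogZ]
      refine integral_congr_ae (Filter.Eventually.of_forall fun ω => ?_)
      simp only [hgdef, Pi.mul_apply, Pi.sub_apply]
      ring
    rw [← e1, ← e2, h2]
  -- decompositions of the three integrals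
  have eqA : ∫ ω, (X ω * Real.log (X ω / Z ω) - X ω + Z ω) ∂μ
      = ((∫ ω, X ω * Real.log (X ω) ∂μ - ∫ ω, X ω * Real.log (Z ω) ∂μ)
          - ∫ ω, X ω ∂μ) + ∫ ω, Z ω ∂μ := by
    have I1 : Integrable (fun ω => X ω * Real.log (X ω) - X ω * Real.log (Z ω)) μ :=
      hXlogX.sub hXlogZ'
    have I2 : Integrable (fun ω => X ω * Real.log (X ω) - X ω * Real.log (Z ω) - X ω) μ :=
      I1.sub hX
    rw [← integral_sub hXlogX hXlogZ', ← integral_sub I1 hX, ← integral_add I2 hZ]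
    refine integral_congr_ae ?_
    filter_upwards [hXpos, hZpos] with ω h1 h2
    rw [Real.log_div h1.ne' h2.ne']
    ring
  have eqB : ∫ ω, (X ω * Real.log (X ω / Y ω) - X ω + Y ω) ∂μ
      = ((∫ ω, X ω * Real.log (X ω) ∂μ - ∫ ω, X ω * Real.log (Y ω) ∂μ)
          - ∫ ω, X ω ∂μ) + ∫ ω, Y ω ∂μ := by
    have I1 : Integrable (fun ω => X ω * Real.log (X ω) - X ω * Real.log (Y ω)) μ :=
      hXlogX.sub hXlogY
    have I2 : Integrable (fun ω => X ω * Real.log (X ω) - X ω * Real.log (Y ω) - X ω) μ :=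
      I1.sub hX
    rw [← integral_sub hXlogX hXlogY, ← integral_sub I1 hX, ← integral_add I2 hYint]
    refine integral_congr_ae ?_
    filter_upwards [hXpos, hYpos] with ω h1 h2
    rw [Real.log_div h1.ne' h2.ne']
    ring
  have eqC : ∫ ω, (Y ω * Real.log (Y ω / Z ω) - Y ω + Z ω) ∂μ
      = ((∫ ω, Y ω * Real.log (Y ω) ∂μ - ∫ ω, Y ω * Real.log (Z ω) ∂μ)
          - ∫ ω, Y ω ∂μ) + ∫ ω, Z ω ∂μ := by
    have I1 : Integrable (fun ω => Y ω * Real.log (Y ω) - Y ω * Real.log (Z ω)) μ :=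
      hYlogY.sub hYlogZ
    have I2 : Integrable (fun ω => Y ω * Real.log (Y ω) - Y ω * Real.log (Z ω) - Y ω) μ :=
      I1.sub hYint
    rw [← integral_sub hYlogY hYlogZ, ← integral_sub I1 hYint, ← integral_add I2 hZ]
    refine integral_congr_ae ?_
    filter_upwards [hYpos, hZpos] with ω h1 h2
    rw [Real.log_div h1.ne' h2.ne']
    ring
  have hCnonneg : 0 ≤ ∫ ω, (Y ω * Real.log (Y ω / Z ω) - Y ω + Z ω) ∂μ := by
    refine integral_nonneg_of_ae ?_
    filter_upwards [hYpos, hZpos] with ω h1 h2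
    exact aux_loss_nonneg h1 h2
  have hmain : ∫ ω, (X ω * Real.log (X ω / Z ω) - X ω + Z ω) ∂μ
      = (∫ ω, (X ω * Real.log (X ω / Y ω) - X ω + Y ω) ∂μ)
        + ∫ ω, (Y ω * Real.log (Y ω / Z ω) - Y ω + Z ω) ∂μ := by
    rw [eqA, eqB, eqC]
    linarith [hcross]
  exact ⟨hmain, by linarith [hmain, hCnonneg]⟩
end
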